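/- Let X be a set and let φ : ℓ^∞(X) → ℂ be a unital ℂ-algebra homomorphism on the algebra ℓ^∞(X) of bounded complex-valued functions on X (with pointwise operations), which is completely additive in the following sense: for every index type ι and every family (S_i)_{i ∈ ι} of pairwise disjoint subsets of X, the family (φ(1_{S_i}))_{i ∈ ι} has sum φ(1_{⋃_i S_i}), where 1_S ∈ ℓ^∞(X) denotes the indicator function of S ⊆ X. Then there exists x₀ ∈ X such that φ(f) = f(x₀) for every f ∈ ℓ^∞(X). -/
import Mathlib

open scoped ENNReal

/-- The indicator function of a set `S ⊆ X`, as an element of `ℓ^∞(X)`. -/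
noncomputable def indicatorLinfty {X : Type} (S : Set X) : lp (fun _ : X => ℂ) ∞ :=
  ⟨S.indicator (fun _ => (1 : ℂ)), memℓp_infty (by
    refine ⟨1, ?_⟩
    rintro r ⟨x, rfl⟩
    by_cases hx : x ∈ S <;> simp [hx])⟩

lemma indicatorLinfty_apply {X : Type} (S : Set X) (x : X) :
    indicatorLinfty S x = S.indicator (fun _ => (1 : ℂ)) x := rfl

lemma indicatorLinfty_univ {X : Type} :
    indicatorLinfty (Set.univ : Set X) = 1 := by
  ext x
  rw [indicatorLinfty_apply, lp.infty_coeFn_one]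
  simp

lemma indicatorLinfty_sq {X : Type} (S : Set X) :
    indicatorLinfty S * indicatorLinfty S = indicatorLinfty S := by
  ext x
  rw [lp.infty_coeFn_mul]
  simp only [Pi.mul_apply, indicatorLinfty_apply]
  by_cases hx : x ∈ S <;> simp [hx]

theorem stmt13 {X : Type} (φ : lp (fun _ : X => ℂ) ∞ →ₐ[ℂ] ℂ)
    (hadd : ∀ (ι : Type) (S : ι → Set X), Pairwise (Function.onFun Disjoint S) →
      HasSum (fun i => φ (indicatorLinfty (S i))) (φ (indicatorLinfty (⋃ i, S i)))) :
    ∃ x₀ : X, ∀ f : lp (fun _ : X => ℂ) ∞, φ f = f x₀ := by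
  have hsum := hadd X (fun x => {x}) (fun a b hab => by
    simpa [Function.onFun, Set.disjoint_singleton] using hab)
  have huniv : (⋃ x : X, ({x} : Set X)) = Set.univ := by
    ext y; simp
  rw [huniv, indicatorLinfty_univ, map_one] at hsum
  -- there exists x₀ with φ (indicator {x₀}) ≠ 0
  have hx : ∃ x₀ : X, φ (indicatorLinfty ({x₀} : Set X)) ≠ 0 := by
    by_contra h
    push_neg at h
    have : HasSum (fun x : X => φ (indicatorLinfty ({x} : Set X))) 0 := by
      simpa [h] using (hasSum_zero : HasSum (fun _ : X => (0:ℂ)) 0)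
    exact one_ne_zero (hsum.unique this)
  obtain ⟨x₀, hx₀⟩ := hx
  have hidem : φ (indicatorLinfty ({x₀} : Set X)) = 1 := by
    have := congrArg φ (indicatorLinfty_sq ({x₀} : Set X))
    rw [map_mul] at this
    have := mul_left_cancel₀ hx₀ (this.trans (mul_one _).symm)
    exact this
  refine ⟨x₀, fun f => ?_⟩
  have key : f * indicatorLinfty ({x₀} : Set X) = f x₀ • indicatorLinfty ({x₀} : Set X) := by
    ext x
    rw [lp.infty_coeFn_mul, lp.coeFn_smul]
    simp only [Pi.mul_apply, Pi.smul_apply, indicatorLinfty_apply, smul_eq_mul]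
    by_cases hxx : x ∈ ({x₀} : Set X)
    · rcases hxx with rfl; simp
    · simp [hxx]
  have := congrArg φ key
  rw [map_mul, map_smul, hidem, mul_one, smul_eq_mul, mul_one] at this
  exact this
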